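/- For positive integers α, β and n, the determinant of the n×n matrix with (i,j) entry Γ(α+i+j−2)/Γ(α+β+i+j−2), multiplied by Γ(β)^n, equals ∏_{j=0}^{n−1} Γ(α+j)·Γ(β+j)·j! / Γ(α+β+n+j−1). -/

import Mathlib

open Finset Matrix

private lemma fact_prod_aux (c : ℕ) : ∀ m : ℕ,
    (Nat.factorial c : ℝ) * ∏ j ∈ range m, ((c + 1 + j : ℕ) : ℝ) = (Nat.factorial (c + m) : ℝ) := by
  intro m
  induction m with
  | zero => simp
  | succ m ih =>
    rw [prod_range_succ, ← mul_assoc, ih]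
    have : c + (m + 1) = (c + m) + 1 := by omega
    rw [this, Nat.factorial_succ]
    push_cast
    ring

private lemma key_det (n : ℕ) : ∀ a b : ℕ,
    Matrix.det (Matrix.of fun i j : Fin n =>
      ((Nat.factorial (a + i + j) : ℝ)) / (Nat.factorial (a + b + 1 + i + j) : ℝ)) =
    ∏ j ∈ Finset.range n,
      ((Nat.factorial (a + j) : ℝ) * (Nat.factorial (b + j)) * (Nat.factorial j)) /
        ((Nat.factorial b : ℝ) * (Nat.factorial (a + b + n + j))) := by
  induction n with
  | zero => intro a b; simp
  | succ m IH =>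
    intro a b
    set M : Matrix (Fin (m+1)) (Fin (m+1)) ℝ := Matrix.of fun i j : Fin (m+1) =>
        ((Nat.factorial (a + i + j) : ℝ)) / (Nat.factorial (a + b + 1 + i + j) : ℝ) with hM
    set U : Matrix (Fin (m+1)) (Fin (m+1)) ℝ := Matrix.of fun k j : Fin (m+1) =>
        (if k = j then (1:ℝ) else 0) +
        (if (k : ℕ) + 1 = (j : ℕ) then
          -(((a + (j:ℕ)) : ℕ) : ℝ) / (((a + b + 1 + (j:ℕ)) : ℕ) : ℝ) else 0) with hU
    set N : Matrix (Fin (m+1)) (Fin (m+1)) ℝ := Matrix.of fun i j : Fin (m+1) =>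
        Fin.cases ((Nat.factorial (a + i) : ℝ) / (Nat.factorial (a + b + 1 + i) : ℝ))
          (fun j' : Fin m => ((i : ℕ) : ℝ) * ((b : ℝ) + 1) * (Nat.factorial (a + i + j') : ℝ) /
            ((((a + b + 2 + (j':ℕ)) : ℕ) : ℝ) * (Nat.factorial (a + b + 2 + i + j') : ℝ))) j
        with hN
    -- U is unitriangular
    have hUdet : U.det = 1 := by
      rw [Matrix.det_of_upperTriangular]
      · apply Finset.prod_eq_one
        intro i _
        simp [hU]
      · intro i j hij
        have h1 : ¬ (i = j) := by intro h; subst h; exact lt_irrefl _ hij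
        have h2 : ¬ ((i:ℕ) + 1 = (j:ℕ)) := by
          have : (j:ℕ) < (i:ℕ) := hij
          omega
        simp [hU, h1, h2]
    -- column operations: M * U = N
    have hMU : M * U = N := by
      ext i j
      rw [Matrix.mul_apply]
      have hsplit : ∀ k : Fin (m+1), M i k * U k j
          = (if k = j then M i k else 0) + (if (k:ℕ) + 1 = (j:ℕ) then
              M i k * (-(((a + (j:ℕ)) : ℕ) : ℝ) / (((a + b + 1 + (j:ℕ)) : ℕ) : ℝ)) else 0) := by
        intro k
        rw [hU]
        simp only [Matrix.of_apply, mul_add]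
        congr 1
        · split <;> simp
        · split <;> simp
      rw [Finset.sum_congr rfl (fun k _ => hsplit k), Finset.sum_add_distrib]
      rw [Finset.sum_ite_eq' Finset.univ j (fun k => M i k)]
      simp only [Finset.mem_univ, if_true]
      induction j using Fin.cases with
      | zero =>
        have : ∀ k : Fin (m+1), ¬ ((k:ℕ) + 1 = ((0 : Fin (m+1)):ℕ)) := by intro k; simp
        rw [Finset.sum_eq_zero (fun k _ => by rw [if_neg (this k)])]
        rw [hM, hN]
        simp
      | succ j' =>
        have hcond : ∀ k : Fin (m+1),
            ((k:ℕ) + 1 = ((j'.succ : Fin (m+1)):ℕ)) ↔ k = j'.castSucc := by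
          intro k
          rw [Fin.ext_iff]
          simp [Fin.val_succ]
        have hsum : (∑ k : Fin (m+1), if (k:ℕ) + 1 = ((j'.succ : Fin (m+1)):ℕ) then
            M i k * (-(((a + ((j'.succ : Fin (m+1)):ℕ)) : ℕ) : ℝ) /
              (((a + b + 1 + ((j'.succ : Fin (m+1)):ℕ)) : ℕ) : ℝ)) else 0)
            = M i j'.castSucc * (-(((a + ((j'.succ : Fin (m+1)):ℕ)) : ℕ) : ℝ) /
              (((a + b + 1 + ((j'.succ : Fin (m+1)):ℕ)) : ℕ) : ℝ)) := by
          simp only [hcond]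
          rw [Finset.sum_ite_eq' Finset.univ j'.castSucc]
          simp
        rw [hsum, hM, hN]
        simp only [Matrix.of_apply, Fin.cases_succ, Fin.val_succ, Fin.coe_castSucc]
        have h1 : a + (i:ℕ) + ((j':ℕ)+1) = (a + (i:ℕ) + (j':ℕ)) + 1 := by omega
        have h2 : a + b + 1 + (i:ℕ) + ((j':ℕ)+1) = (a + b + 1 + (i:ℕ) + (j':ℕ)) + 1 := by omega
        have h3 : a + b + 2 + (i:ℕ) + (j':ℕ) = (a + b + 1 + (i:ℕ) + (j':ℕ)) + 1 := by omega
        have h4 : a + b + 1 + ((j':ℕ)+1) = a + b + 2 + (j':ℕ) := by omega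
        rw [h1, h2, h3, h4]
        simp only [Nat.factorial_succ]
        have hf1 : ((a + (i:ℕ) + (j':ℕ)).factorial : ℝ) ≠ 0 := by positivity
        have hf2 : ((a + b + 1 + (i:ℕ) + (j':ℕ)).factorial : ℝ) ≠ 0 := by positivity
        have hn1 : (((a + b + 1 + (i:ℕ) + (j':ℕ)) + 1 : ℕ) : ℝ) ≠ 0 := by positivity
        have hn2 : (((a + b + 2 + (j':ℕ)) : ℕ) : ℝ) ≠ 0 := by positivity
        field_simp
        push_cast
        ring
    -- compute det N
    have hNdet : N.det = ((Nat.factorial a : ℝ) / (Nat.factorial (a + b + 1) : ℝ)) *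
        ((∏ i : Fin m, (((i:ℕ):ℝ) + 1) * ((b:ℝ) + 1)) *
         ((∏ j : Fin m, ((((a + b + 2 + (j:ℕ)) : ℕ) : ℝ))⁻¹) *
          Matrix.det (Matrix.of fun i j : Fin m =>
            ((Nat.factorial (a + 1 + i + j) : ℝ)) / (Nat.factorial (a + b + 3 + i + j) : ℝ)))) := by
      rw [Matrix.det_succ_row_zero, Fin.sum_univ_succ]
      have hzero : ∀ j : Fin m, N 0 j.succ = 0 := by
        intro j
        rw [hN]
        simp
      have htail : (∑ j : Fin m, (-1) ^ ((j.succ : Fin (m+1)) : ℕ) * N 0 j.succ *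
          (N.submatrix Fin.succ (j.succ).succAbove).det) = 0 := by
        apply Finset.sum_eq_zero
        intro j _
        rw [hzero j]
        ring
      rw [htail, add_zero]
      have h00 : N 0 0 = (Nat.factorial a : ℝ) / (Nat.factorial (a + b + 1) : ℝ) := by
        rw [hN]; simp
      have hsub : N.submatrix Fin.succ ((0 : Fin (m+1)).succAbove) =
          Matrix.of (fun i j : Fin m => ((((i:ℕ):ℝ) + 1) * ((b:ℝ) + 1)) *
            (Matrix.of (fun i j : Fin m => ((((a + b + 2 + (j:ℕ)) : ℕ) : ℝ))⁻¹ *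
              (Matrix.of fun i j : Fin m =>
                ((Nat.factorial (a + 1 + i + j) : ℝ)) /
                  (Nat.factorial (a + b + 3 + i + j) : ℝ)) i j)) i j) := by
        ext i j
        rw [Fin.succAbove_zero, Matrix.submatrix_apply, hN]
        simp only [Matrix.of_apply, Fin.cases_succ, Fin.val_succ]
        have h1 : a + ((i:ℕ)+1) + (j:ℕ) = a + 1 + (i:ℕ) + (j:ℕ) := by omega
        have h2 : a + b + 2 + ((i:ℕ)+1) + (j:ℕ) = a + b + 3 + (i:ℕ) + (j:ℕ) := by omega
        rw [h1, h2]
        have hn2 : ((((a + b + 2 + (j:ℕ)) : ℕ)) : ℝ) ≠ 0 := by positivity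
        have hf : ((a + b + 3 + (i:ℕ) + (j:ℕ)).factorial : ℝ) ≠ 0 := by positivity
        push_cast
        field_simp
      rw [hsub, h00, Matrix.det_mul_column, Matrix.det_mul_row]
      simp
    -- put it together
    have hdet : M.det = N.det := by
      rw [← hMU, Matrix.det_mul, hUdet, mul_one]
    rw [hdet, hNdet]
    -- apply induction hypothesis and finish with product manipulations
    have ih := IH (a + 1) (b + 1)
    simp only [show ∀ x y : ℕ, a + 1 + (b + 1) + 1 + x + y = a + b + 3 + x + y from
      fun x y => by omega] at ih
    simp only [show ∀ x : ℕ, a + 1 + (b + 1) + m + x = a + b + 2 + m + x from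
      fun x => by omega] at ih
    rw [ih]
    rw [Fin.prod_univ_eq_prod_range (fun i => (((i:ℕ):ℝ) + 1) * ((b:ℝ) + 1)),
        Fin.prod_univ_eq_prod_range (fun j => ((((a + b + 2 + (j:ℕ)) : ℕ) : ℝ))⁻¹)]
    simp only [Finset.prod_div_distrib, Finset.prod_mul_distrib, Finset.prod_const,
      Finset.card_range, Finset.prod_inv_distrib]
    rw [Finset.prod_range_succ (fun j => (Nat.factorial j : ℝ))]
    rw [Finset.prod_range_succ' (fun j => (Nat.factorial (a + j) : ℝ))]
    rw [Finset.prod_range_succ' (fun j => (Nat.factorial (b + j) : ℝ))]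
    rw [Finset.prod_range_succ' (fun j => (Nat.factorial (a + b + (m+1) + j) : ℝ))]
    have e3 : ∀ x : ℕ, a + b + (m+1) + (x + 1) = a + b + 2 + m + x := fun x => by omega
    have e4 : a + b + (m+1) + 0 = a + b + 1 + m := by omega
    simp only [e3, e4, add_zero]
    have e1 : (∏ x ∈ range m, (Nat.factorial (a + (x+1)) : ℝ))
        = ∏ x ∈ range m, (Nat.factorial (a + 1 + x) : ℝ) :=
      Finset.prod_congr rfl (fun x _ => by rw [show a + (x+1) = a + 1 + x from by omega])
    have e2 : (∏ x ∈ range m, (Nat.factorial (b + (x+1)) : ℝ))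
        = ∏ x ∈ range m, (Nat.factorial (b + 1 + x) : ℝ) :=
      Finset.prod_congr rfl (fun x _ => by rw [show b + (x+1) = b + 1 + x from by omega])
    rw [e1, e2]
    have hm : (∏ i ∈ range m, (((i:ℕ):ℝ) + 1)) = (Nat.factorial m : ℝ) := by
      have := congrArg (Nat.cast : ℕ → ℝ) (Finset.prod_range_add_one_eq_factorial m)
      push_cast at this
      exact this
    rw [hm]
    have hQ : (Nat.factorial (a + b + 1) : ℝ) * ∏ j ∈ range m, (((a + b + 2 + j : ℕ)) : ℝ)
        = (Nat.factorial (a + b + 1 + m) : ℝ) := by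
      have := fact_prod_aux (a + b + 1) m
      simp only [show ∀ x : ℕ, a + b + 1 + 1 + x = a + b + 2 + x from fun x => by omega] at this
      exact this
    have hQne : (∏ j ∈ range m, (((a + b + 2 + j : ℕ)) : ℝ)) ≠ 0 :=
      Finset.prod_ne_zero_iff.mpr (fun j _ => by positivity)
    have hRne : (∏ j ∈ range m, ((Nat.factorial (a + b + 2 + m + j) : ℝ))) ≠ 0 :=
      Finset.prod_ne_zero_iff.mpr (fun j _ => by positivity)
    have h1 : (Nat.factorial (a + b + 1) : ℝ) ≠ 0 := by positivity
    have h2 : (Nat.factorial b : ℝ) ≠ 0 := by positivity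
    have h3 : (Nat.factorial (a + b + 1 + m) : ℝ) ≠ 0 := by positivity
    have h4 : ((b:ℝ) + 1) ≠ 0 := by positivity
    have h5 : (Nat.factorial (b+1) : ℝ) ≠ 0 := by positivity
    rw [show (Nat.factorial (b+1) : ℝ) = ((b:ℝ)+1) * (Nat.factorial b : ℝ) from by
      rw [Nat.factorial_succ]; push_cast; ring]
    rw [mul_pow]
    field_simp
    rw [← hQ]
    push_cast
    ring

/-- For positive integers α, β, n,
`Γ(β)^n · det(Γ(α+i+j−2)/Γ(α+β+i+j−2)) = ∏_{j=0}^{n−1} Γ(α+j)Γ(β+j)j!/Γ(α+β+n+j−1)`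
(1-based indices i, j). -/
theorem gamma_det_eval (α β n : ℕ) (hα : 0 < α) (hβ : 0 < β) (hn : 0 < n) :
    Real.Gamma β ^ n * Matrix.det (Matrix.of fun i j : Fin n =>
      Real.Gamma ((α + i.val + j.val : ℕ)) / Real.Gamma ((α + β + i.val + j.val : ℕ))) =
    ∏ j ∈ Finset.range n,
      Real.Gamma ((α + j : ℕ)) * Real.Gamma ((β + j : ℕ)) * (Nat.factorial j) /
        Real.Gamma ((α + β + n + j - 1 : ℕ)) := by
  obtain ⟨a, rfl⟩ := Nat.exists_eq_succ_of_ne_zero hα.ne'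
  obtain ⟨b, rfl⟩ := Nat.exists_eq_succ_of_ne_zero hβ.ne'
  have gam : ∀ m : ℕ, Real.Gamma ((m + 1 : ℕ) : ℝ) = (Nat.factorial m : ℝ) := by
    intro m
    push_cast
    exact Real.Gamma_nat_eq_factorial m
  have g1 : ∀ i j : ℕ, a + 1 + i + j = (a + i + j) + 1 := fun i j => by omega
  have g2 : ∀ i j : ℕ, a + 1 + (b + 1) + i + j = (a + b + 1 + i + j) + 1 := fun i j => by omega
  have g3 : ∀ j : ℕ, a + 1 + j = (a + j) + 1 := fun j => by omega
  have g4 : ∀ j : ℕ, b + 1 + j = (b + j) + 1 := fun j => by omega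
  have g5 : ∀ j : ℕ, a + 1 + (b + 1) + n + j - 1 = (a + b + n + j) + 1 := fun j => by omega
  simp only [g5]
  simp only [g2]
  simp only [g1]
  simp only [g3]
  simp only [g4]
  simp only [gam]
  rw [key_det n a b]
  rw [show (Nat.factorial b : ℝ) ^ n = ∏ _x ∈ range n, (Nat.factorial b : ℝ) from by
    rw [Finset.prod_const, Finset.card_range]]
  rw [← Finset.prod_mul_distrib]
  apply Finset.prod_congr rfl
  intro x _
  have h2 : (Nat.factorial b : ℝ) ≠ 0 := by positivity
  have h3 : (Nat.factorial (a + b + n + x) : ℝ) ≠ 0 := by positivity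
  field_simp
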